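/- With ρ as in the Maier-Saupe self-consistent form, if γ₁ ≠ γ₃ and ∫_{S²} pᵢ² ρ(p) dp = γᵢ for all i, then 2β ∫_{S²} p₁² p₃² ρ(p) dp = 1. -/

import Mathlib

open MeasureTheory Real

local notation "E3" => EuclideanSpace ℝ (Fin 3)

noncomputable def S2 : Set (EuclideanSpace ℝ (Fin 3)) := Metric.sphere 0 1

/-- embedding of a face of the cube -/
noncomputable def faceMap (i : Fin 3) (c : ℝ) : (Fin 2 → ℝ) → E3 :=
  fun y => (EuclideanSpace.equiv (Fin 3) ℝ).symm (i.insertNth c y)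

lemma faceMap_lipschitz (i : Fin 3) (c : ℝ) : LipschitzWith 2 (faceMap i c) := by
  apply LipschitzWith.of_dist_le_mul
  intro y y'
  rw [EuclideanSpace.dist_eq,
    Fin.sum_univ_succAbove (fun k => dist (faceMap i c y k) (faceMap i c y' k) ^ 2) i]
  have e1 : faceMap i c y i = c := by
    show (i.insertNth c y : Fin 3 → ℝ) i = c; exact Fin.insertNth_apply_same (α := fun _ => ℝ) i c y
  have e1' : faceMap i c y' i = c := by
    show (i.insertNth c y' : Fin 3 → ℝ) i = c; exact Fin.insertNth_apply_same (α := fun _ => ℝ) i c y'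
  have e2 : ∀ j : Fin 2, faceMap i c y (i.succAbove j) = y j := by
    intro j
    show (i.insertNth c y : Fin 3 → ℝ) (i.succAbove j) = y j
    exact Fin.insertNth_apply_succAbove (α := fun _ => ℝ) i c y j
  have e2' : ∀ j : Fin 2, faceMap i c y' (i.succAbove j) = y' j := by
    intro j
    show (i.insertNth c y' : Fin 3 → ℝ) (i.succAbove j) = y' j
    exact Fin.insertNth_apply_succAbove (α := fun _ => ℝ) i c y' j
  simp only [e1, e1', e2, e2', dist_self]
  have h1 : ∀ j : Fin 2, dist (y j) (y' j) ^ 2 ≤ dist y y' ^ 2 := by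
    intro j
    have := dist_le_pi_dist y y' j
    nlinarith [dist_nonneg (x := y) (y := y'), dist_nonneg (x := y j) (y := y' j)]
  have hsum : (0:ℝ) ^ 2 + ∑ j : Fin 2, dist (y j) (y' j) ^ 2
      ≤ 2 * dist y y' ^ 2 := by
    simp only [Fin.sum_univ_two]
    have := h1 0; have := h1 1
    nlinarith
  calc Real.sqrt ((0:ℝ)^2 + ∑ j : Fin 2, dist (y j) (y' j) ^ 2)
      ≤ Real.sqrt (2 * dist y y' ^ 2) := Real.sqrt_le_sqrt hsum
    _ ≤ Real.sqrt (2^2 * dist y y' ^ 2) := by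
        apply Real.sqrt_le_sqrt; nlinarith [dist_nonneg (x := y) (y := y')]
    _ = 2 * dist y y' := by
        rw [show (2:ℝ)^2 * dist y y' ^2 = (2 * dist y y')^2 by ring]
        exact Real.sqrt_sq (by positivity)

/-- the cube boundary -/
def cubeB : Set E3 := {x | ∃ i, |x i| = 1 ∧ ∀ j, |x j| ≤ 1}

lemma cubeB_subset : cubeB ⊆ ⋃ z : Fin 3 × Bool,
    faceMap z.1 (cond z.2 1 (-1)) '' Metric.closedBall (0 : Fin 2 → ℝ) 1 := by
  rintro x ⟨i, hi, hall⟩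
  have hc : x i = 1 ∨ x i = -1 := by rcases abs_eq (by norm_num : (0:ℝ) ≤ 1) |>.mp hi with h | h
    <;> [left; right] <;> linarith
  have hmem : i.removeNth x ∈ Metric.closedBall (0 : Fin 2 → ℝ) 1 := by
    rw [Metric.mem_closedBall, dist_zero_right]
    refine pi_norm_le_iff_of_nonneg (by norm_num) |>.mpr fun j => ?_
    simpa [Fin.removeNth, Real.norm_eq_abs] using hall (i.succAbove j)
  rcases hc with h | h
  · refine Set.mem_iUnion.mpr ⟨(i, true), ⟨i.removeNth x, hmem, ?_⟩⟩
    simp only [cond, faceMap]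
    rw [← h, Fin.insertNth_self_removeNth]
    rfl
  · refine Set.mem_iUnion.mpr ⟨(i, false), ⟨i.removeNth x, hmem, ?_⟩⟩
    simp only [cond, faceMap]
    rw [← h, Fin.insertNth_self_removeNth]
    rfl

lemma cubeB_measure_finite : μH[2] cubeB ≠ ⊤ := by
  have h1 : ∀ z : Fin 3 × Bool,
      μH[2] (faceMap z.1 (cond z.2 1 (-1)) '' Metric.closedBall (0 : Fin 2 → ℝ) 1) ≠ ⊤ := by
    intro z
    have := (faceMap_lipschitz z.1 (cond z.2 1 (-1))).hausdorffMeasure_image_le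
      (by norm_num : (0:ℝ) ≤ 2) (Metric.closedBall (0 : Fin 2 → ℝ) 1)
    refine ne_top_of_le_ne_top ?_ this
    have hpi : (μH[(2:ℝ)] : Measure (Fin 2 → ℝ)) = volume := by
      have := hausdorffMeasure_pi_real (ι := Fin 2)
      norm_num at this
      exact this
    rw [hpi]
    have : volume (Metric.closedBall (0 : Fin 2 → ℝ) 1) < ⊤ :=
      (Metric.isBounded_closedBall).measure_lt_top
    exact ENNReal.mul_ne_top (by simp) this.ne
  refine ne_top_of_le_ne_top ?_ ((measure_mono cubeB_subset).trans (measure_iUnion_le _))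
  rw [tsum_fintype]
  exact ENNReal.sum_ne_top.mpr fun z _ => h1 z

lemma S2_subset_proj : S2 ⊆ (fun x : E3 => ‖x‖⁻¹ • x) '' cubeB := by
  intro p hp
  have hnp : ‖p‖ = 1 := by simpa [S2] using hp
  obtain ⟨i, -, hi⟩ := Finset.exists_max_image (Finset.univ : Finset (Fin 3))
    (fun j => |p j|) ⟨0, Finset.mem_univ 0⟩
  have hipos : 0 < |p i| := by
    by_contra h
    push_neg at h
    have hz : ∀ j, p j = 0 := fun j => abs_eq_zero.mp
      (le_antisymm (le_trans (hi j (Finset.mem_univ j)) h) (abs_nonneg _))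
    have : p = 0 := by ext j; simpa using hz j
    rw [this] at hnp; simp at hnp
  set t := |p i|⁻¹ with ht
  have htpos : 0 < t := inv_pos.mpr hipos
  refine ⟨t • p, ⟨i, ?_, ?_⟩, ?_⟩
  · show |(t • p) i| = 1
    have : (t • p) i = t * p i := rfl
    rw [this, abs_mul, abs_of_pos htpos, ht, inv_mul_cancel₀ (ne_of_gt hipos)]
  · intro j
    show |(t • p) j| ≤ 1
    have : (t • p) j = t * p j := rfl
    rw [this, abs_mul, abs_of_pos htpos]
    calc t * |p j| ≤ t * |p i| := by
          exact mul_le_mul_of_nonneg_left (hi j (Finset.mem_univ j)) (le_of_lt htpos)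
      _ = 1 := inv_mul_cancel₀ (ne_of_gt hipos)
  · have hns : ‖t • p‖ = t := by
      rw [norm_smul, Real.norm_eq_abs, abs_of_pos htpos, hnp, mul_one]
    show ‖t • p‖⁻¹ • (t • p) = p
    rw [hns, smul_smul, inv_mul_cancel₀ (ne_of_gt htpos), one_smul]

lemma proj_lipschitzOn : LipschitzOnWith 2 (fun x : E3 => ‖x‖⁻¹ • x) cubeB := by
  rw [lipschitzOnWith_iff_dist_le_mul]
  intro x hx y hy
  obtain ⟨i, hi, -⟩ := hx
  obtain ⟨j, hj, -⟩ := hy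
  have hxn : 1 ≤ ‖x‖ := by
    rw [← hi]
    rw [EuclideanSpace.norm_eq]
    rw [show |x i| = Real.sqrt (x i ^ 2) by rw [Real.sqrt_sq_eq_abs]]
    apply Real.sqrt_le_sqrt
    rw [show x i ^ 2 = ‖x i‖ ^ 2 by rw [Real.norm_eq_abs, sq_abs]]
    exact Finset.single_le_sum (f := fun k => ‖x k‖ ^ 2) (fun k _ => by positivity)
      (Finset.mem_univ i)
  have hyn : 1 ≤ ‖y‖ := by
    rw [← hj]
    rw [EuclideanSpace.norm_eq]
    rw [show |y j| = Real.sqrt (y j ^ 2) by rw [Real.sqrt_sq_eq_abs]]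
    apply Real.sqrt_le_sqrt
    rw [show y j ^ 2 = ‖y j‖ ^ 2 by rw [Real.norm_eq_abs, sq_abs]]
    exact Finset.single_le_sum (f := fun k => ‖y k‖ ^ 2) (fun k _ => by positivity)
      (Finset.mem_univ j)
  have key : ∀ u v : E3, 1 ≤ ‖u‖ → 1 ≤ ‖v‖ → ‖u‖ ≤ ‖v‖ →
      dist (‖u‖⁻¹ • u) (‖v‖⁻¹ • v) ≤ 2 * dist u v := by
    intro u v hu hv huv
    have hu0 : (0:ℝ) < ‖u‖ := lt_of_lt_of_le one_pos hu
    have hv0 : (0:ℝ) < ‖v‖ := lt_of_lt_of_le one_pos hv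
    rw [dist_eq_norm]
    have hdecomp : ‖u‖⁻¹ • u - ‖v‖⁻¹ • v = ‖u‖⁻¹ • (u - v) + (‖u‖⁻¹ - ‖v‖⁻¹) • v := by
      rw [smul_sub, sub_smul]; abel
    rw [hdecomp]
    have h1 : ‖‖u‖⁻¹ • (u - v)‖ ≤ ‖u - v‖ := by
      rw [norm_smul, Real.norm_eq_abs, abs_of_pos (inv_pos.mpr hu0)]
      nlinarith [norm_nonneg (u - v), inv_le_one_of_one_le₀ hu, inv_pos.mpr hu0]
    have h2 : ‖(‖u‖⁻¹ - ‖v‖⁻¹) • v‖ ≤ ‖u - v‖ := by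
      rw [norm_smul, Real.norm_eq_abs]
      have habs : |‖u‖⁻¹ - ‖v‖⁻¹| = (‖v‖ - ‖u‖) / (‖u‖ * ‖v‖) := by
        rw [abs_of_nonneg]
        · field_simp
        · have := inv_anti₀ hu0 huv
          linarith
      rw [habs]
      have hvu : ‖v‖ - ‖u‖ ≤ ‖u - v‖ := by
        have := norm_sub_norm_le v u
        rw [show ‖v - u‖ = ‖u - v‖ from norm_sub_rev v u] at this
        linarith
      calc (‖v‖ - ‖u‖) / (‖u‖ * ‖v‖) * ‖v‖ = (‖v‖ - ‖u‖) / ‖u‖ := by field_simp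
        _ ≤ ‖u - v‖ / ‖u‖ := by gcongr
        _ ≤ ‖u - v‖ := by
            rw [div_le_iff₀ hu0]
            nlinarith [norm_nonneg (u - v)]
    calc ‖‖u‖⁻¹ • (u - v) + (‖u‖⁻¹ - ‖v‖⁻¹) • v‖
        ≤ ‖‖u‖⁻¹ • (u - v)‖ + ‖(‖u‖⁻¹ - ‖v‖⁻¹) • v‖ := norm_add_le _ _
      _ ≤ ‖u - v‖ + ‖u - v‖ := add_le_add h1 h2
      _ = 2 * dist u v := by rw [dist_eq_norm]; ring
  push_cast
  rcases le_total ‖x‖ ‖y‖ with h | h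
  · exact key x y hxn hyn h
  · rw [dist_comm, dist_comm x y]; exact key y x hyn hxn h

lemma S2_measure_finite : μH[2] S2 ≠ ⊤ := by
  have h1 := proj_lipschitzOn.hausdorffMeasure_image_le (by norm_num : (0:ℝ) ≤ 2)
  refine ne_top_of_le_ne_top ?_ (le_trans (measure_mono S2_subset_proj) h1)
  exact ENNReal.mul_ne_top (by simp) cubeB_measure_finite

instance : IsFiniteMeasure ((μH[2] : Measure E3).restrict S2) := by
  constructor
  rw [Measure.restrict_apply_univ]
  exact lt_top_iff_ne_top.mpr S2_measure_finite


lemma S2_measurable : MeasurableSet S2 := Metric.isClosed_sphere.measurableSet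

noncomputable def rot (θ : ℝ) : E3 → E3 := fun p =>
  (EuclideanSpace.equiv (Fin 3) ℝ).symm
    ![Real.cos θ * p 0 - Real.sin θ * p 2, p 1, Real.sin θ * p 0 + Real.cos θ * p 2]

lemma rot_apply0 (θ : ℝ) (p : E3) : rot θ p 0 = Real.cos θ * p 0 - Real.sin θ * p 2 := rfl
lemma rot_apply1 (θ : ℝ) (p : E3) : rot θ p 1 = p 1 := rfl
lemma rot_apply2 (θ : ℝ) (p : E3) : rot θ p 2 = Real.sin θ * p 0 + Real.cos θ * p 2 := rfl

lemma rot_rot_neg (θ : ℝ) (p : E3) : rot θ (rot (-θ) p) = p := by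
  have pyth := Real.sin_sq_add_cos_sq θ
  ext k
  fin_cases k
  · show rot θ (rot (-θ) p) 0 = p 0
    rw [rot_apply0, rot_apply0, rot_apply2, Real.cos_neg, Real.sin_neg]
    linear_combination (p 0 : ℝ) * pyth
  · show rot θ (rot (-θ) p) 1 = p 1
    rw [rot_apply1, rot_apply1]
  · show rot θ (rot (-θ) p) 2 = p 2
    rw [rot_apply2, rot_apply0, rot_apply2, Real.cos_neg, Real.sin_neg]
    linear_combination (p 2 : ℝ) * pyth

lemma rot_neg_rot (θ : ℝ) (p : E3) : rot (-θ) (rot θ p) = p := by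
  have := rot_rot_neg (-θ) p
  rwa [neg_neg] at this

lemma rot_isometry (θ : ℝ) : Isometry (rot θ) := by
  intro p q
  have pyth := Real.sin_sq_add_cos_sq θ
  rw [edist_dist, edist_dist]
  congr 1
  rw [EuclideanSpace.dist_eq, EuclideanSpace.dist_eq]
  congr 1
  rw [Fin.sum_univ_three, Fin.sum_univ_three]
  simp only [rot_apply0, rot_apply1, rot_apply2, Real.dist_eq, sq_abs]
  linear_combination ((p 0 - q 0)^2 + (p 2 - q 2)^2) * pyth

noncomputable def rotE (θ : ℝ) : E3 ≃ᵢ E3 where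
  toFun := rot θ
  invFun := rot (-θ)
  left_inv := rot_neg_rot θ
  right_inv := rot_rot_neg θ
  isometry_toFun := rot_isometry θ

lemma rot_preimage_S2 (θ : ℝ) : rot θ ⁻¹' S2 = S2 := by
  ext p
  simp only [Set.mem_preimage, S2, Metric.mem_sphere]
  constructor
  · intro h
    have h0 : rot θ (0 : E3) = 0 := by
      ext k; fin_cases k
      · show rot θ (0:E3) 0 = 0
        rw [rot_apply0]; show Real.cos θ * 0 - Real.sin θ * 0 = 0; ring
      · show rot θ (0:E3) 1 = 0
        rw [rot_apply1]; rfl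
      · show rot θ (0:E3) 2 = 0
        rw [rot_apply2]; show Real.sin θ * 0 + Real.cos θ * 0 = 0; ring
    calc dist p 0 = dist (rot θ p) (rot θ 0) := ((rot_isometry θ).dist_eq p 0).symm
      _ = dist (rot θ p) 0 := by rw [h0]
      _ = 1 := h
  · intro h
    have h0 : rot θ (0 : E3) = 0 := by
      ext k; fin_cases k
      · show rot θ (0:E3) 0 = 0
        rw [rot_apply0]; show Real.cos θ * 0 - Real.sin θ * 0 = 0; ring
      · show rot θ (0:E3) 1 = 0
        rw [rot_apply1]; rfl
      · show rot θ (0:E3) 2 = 0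
        rw [rot_apply2]; show Real.sin θ * 0 + Real.cos θ * 0 = 0; ring
    calc dist (rot θ p) 0 = dist (rot θ p) (rot θ 0) := by rw [h0]
      _ = dist p 0 := (rot_isometry θ).dist_eq p 0
      _ = 1 := h

lemma rot_measurePreserving (θ : ℝ) :
    MeasurePreserving (rot θ) ((μH[2] : Measure E3).restrict S2)
      ((μH[2] : Measure E3).restrict S2) := by
  have h := (rotE θ).measurePreserving_hausdorffMeasure 2
  have h2 := h.restrict_preimage (s := S2) S2_measurable
  rwa [show (rotE θ) ⁻¹' S2 = S2 from rot_preimage_S2 θ] at h2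

lemma rot_integral_comp (θ : ℝ) (g : E3 → ℝ) :
    ∫ p in S2, g (rot θ p) ∂(μH[2]) = ∫ p in S2, g p ∂(μH[2]) :=
  (rot_measurePreserving θ).integral_comp
    ((rotE θ).toHomeomorph.measurableEmbedding) g

lemma integrableOn_S2 {f : E3 → ℝ} (hf : Continuous f) (C : ℝ)
    (hC : ∀ p ∈ S2, |f p| ≤ C) : IntegrableOn f S2 (μH[2]) := by
  refine Integrable.mono' (integrable_const C) hf.aestronglyMeasurable.restrict ?_
  rw [ae_restrict_iff' S2_measurable]
  filter_upwards with p hp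
  rw [Real.norm_eq_abs]
  exact hC p hp

lemma S2_sum_sq {p : E3} (hp : p ∈ S2) : p 0 ^ 2 + p 1 ^ 2 + p 2 ^ 2 = 1 := by
  have hnp : ‖p‖ = 1 := by simpa [S2] using hp
  rw [EuclideanSpace.norm_eq] at hnp
  have : ∑ i, ‖p i‖ ^ 2 = 1 := by
    have h := hnp
    have hnn : (0:ℝ) ≤ ∑ i, ‖p i‖ ^ 2 := Finset.sum_nonneg fun i _ => by positivity
    nlinarith [Real.sq_sqrt hnn]
  rw [Fin.sum_univ_three] at this
  simpa [Real.norm_eq_abs, sq_abs] using this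

lemma continuous_coord (i : Fin 3) : Continuous fun p : E3 => p i :=
  (EuclideanSpace.proj i : E3 →L[ℝ] ℝ).continuous

set_option maxHeartbeats 2000000 in
lemma key_identity (β γ₁ γ₂ γ₃ : ℝ) (hβ : 0 < β)
    (w : E3 → ℝ)
    (hw : w = fun p => Real.exp (β * (γ₁ * p 0 ^ 2 + γ₂ * p 1 ^ 2 + γ₃ * p 2 ^ 2))) :
    (∫ p in S2, p 2 ^ 2 * w p ∂(μH[2])) - (∫ p in S2, p 0 ^ 2 * w p ∂(μH[2]))
      = 2 * β * (γ₃ - γ₁) * ∫ p in S2, p 0 ^ 2 * p 2 ^ 2 * w p ∂(μH[2]) := by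
  set G : ℝ := |γ₁| + |γ₂| + |γ₃| with hG
  have hG0 : 0 ≤ G := by positivity
  -- basic bounds on the sphere
  have hsq : ∀ p ∈ S2, p 0 ^ 2 ≤ 1 ∧ p 1 ^ 2 ≤ 1 ∧ p 2 ^ 2 ≤ 1 := by
    intro p hp
    have h := S2_sum_sq hp
    refine ⟨?_, ?_, ?_⟩ <;> nlinarith [sq_nonneg (p 0), sq_nonneg (p 1), sq_nonneg (p 2)]
  -- continuity of w
  have hcont_w : Continuous w := by rw [hw]; fun_prop
  have hcont_rot : ∀ θ, Continuous (rot θ) := fun θ => (rot_isometry θ).continuous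
  -- uniform bound for w along rotations
  have hwrot_le : ∀ (θ : ℝ), ∀ p ∈ S2, w (rot θ p) ≤ Real.exp (β * G) := by
    intro θ p hp
    rw [hw]
    simp only [rot_apply0, rot_apply1, rot_apply2]
    apply Real.exp_le_exp.mpr
    apply mul_le_mul_of_nonneg_left _ (le_of_lt hβ)
    have pyth := Real.sin_sq_add_cos_sq θ
    have hsum := S2_sum_sq hp
    have hab : (Real.cos θ * p 0 - Real.sin θ * p 2) ^ 2
        + (Real.sin θ * p 0 + Real.cos θ * p 2) ^ 2 = p 0 ^ 2 + p 2 ^ 2 := by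
      linear_combination (p 0 ^ 2 + p 2 ^ 2) * pyth
    have h1 : (Real.cos θ * p 0 - Real.sin θ * p 2) ^ 2 ≤ 1 := by
      nlinarith [sq_nonneg (Real.sin θ * p 0 + Real.cos θ * p 2), sq_nonneg (p 1)]
    have h2 : (Real.sin θ * p 0 + Real.cos θ * p 2) ^ 2 ≤ 1 := by
      nlinarith [sq_nonneg (Real.cos θ * p 0 - Real.sin θ * p 2), sq_nonneg (p 1)]
    have h3 := (hsq p hp).2.1
    rw [hG]
    nlinarith [neg_abs_le γ₁, le_abs_self γ₁, neg_abs_le γ₂, le_abs_self γ₂,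
      neg_abs_le γ₃, le_abs_self γ₃, sq_nonneg (Real.cos θ * p 0 - Real.sin θ * p 2),
      sq_nonneg (Real.sin θ * p 0 + Real.cos θ * p 2), sq_nonneg (p 1)]
  have hw_le : ∀ p ∈ S2, w p ≤ Real.exp (β * G) := by
    intro p hp
    rw [hw]
    apply Real.exp_le_exp.mpr
    apply mul_le_mul_of_nonneg_left _ (le_of_lt hβ)
    obtain ⟨h0, h1, h2⟩ := hsq p hp
    rw [hG]
    nlinarith [neg_abs_le γ₁, le_abs_self γ₁, neg_abs_le γ₂, le_abs_self γ₂,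
      neg_abs_le γ₃, le_abs_self γ₃, sq_nonneg (p 0), sq_nonneg (p 1), sq_nonneg (p 2)]
  have hw_pos : ∀ p, 0 < w p := by intro p; rw [hw]; exact Real.exp_pos _
  -- integrability of the basic integrands
  have hint : ∀ (g : E3 → ℝ), Continuous g → (∀ p ∈ S2, |g p| ≤ 1) →
      IntegrableOn (fun p => g p * w p) S2 (μH[2]) := by
    intro g hg hgb
    apply integrableOn_S2 (hg.mul hcont_w) (Real.exp (β * G))
    intro p hp
    rw [Pi.mul_apply, abs_mul, abs_of_pos (hw_pos p)]
    calc |g p| * w p ≤ 1 * Real.exp (β * G) :=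
      mul_le_mul (hgb p hp) (hw_le p hp) (le_of_lt (hw_pos p)) zero_le_one
    _ = Real.exp (β * G) := one_mul _
  have habs1 : ∀ p ∈ S2, ∀ i : Fin 3, |p i| ≤ 1 := by
    intro p hp i
    have h := S2_sum_sq hp
    rw [← Real.sqrt_one, show |p i| = Real.sqrt (p i ^ 2) by rw [Real.sqrt_sq_eq_abs]]
    apply Real.sqrt_le_sqrt
    have hi : i = 0 ∨ i = 1 ∨ i = 2 := by omega
    rcases hi with rfl | rfl | rfl <;>
      nlinarith [sq_nonneg (p 0), sq_nonneg (p 1), sq_nonneg (p 2)]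
  have hintJ0 : IntegrableOn (fun p : E3 => p 0 ^ 2 * w p) S2 (μH[2]) := by
    apply hint _ (by fun_prop)
    intro p hp
    rw [abs_of_nonneg (sq_nonneg _)]; exact (hsq p hp).1
  have hintJ2 : IntegrableOn (fun p : E3 => p 2 ^ 2 * w p) S2 (μH[2]) := by
    apply hint _ (by fun_prop)
    intro p hp
    rw [abs_of_nonneg (sq_nonneg _)]; exact (hsq p hp).2.2
  have hintK : IntegrableOn (fun p : E3 => p 0 * p 2 * w p) S2 (μH[2]) := by
    apply hint _ (by fun_prop)
    intro p hp
    rw [abs_mul]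
    calc |p 0| * |p 2| ≤ 1 * 1 :=
      mul_le_mul (habs1 p hp 0) (habs1 p hp 2) (abs_nonneg _) zero_le_one
    _ = 1 := one_mul 1
  have hintL : IntegrableOn (fun p : E3 => p 0 ^ 2 * p 2 ^ 2 * w p) S2 (μH[2]) := by
    apply hint _ (by fun_prop)
    intro p hp
    rw [abs_mul, abs_of_nonneg (sq_nonneg (p 0)), abs_of_nonneg (sq_nonneg (p 2))]
    calc p 0 ^ 2 * p 2 ^ 2 ≤ 1 * 1 :=
      mul_le_mul (hsq p hp).1 (hsq p hp).2.2 (sq_nonneg _) zero_le_one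
    _ = 1 := one_mul 1
  set J0 : ℝ := ∫ p in S2, p 0 ^ 2 * w p ∂(μH[2]) with hJ0
  set J2 : ℝ := ∫ p in S2, p 2 ^ 2 * w p ∂(μH[2]) with hJ2
  set K : ℝ := ∫ p in S2, p 0 * p 2 * w p ∂(μH[2]) with hK
  set L : ℝ := ∫ p in S2, p 0 ^ 2 * p 2 ^ 2 * w p ∂(μH[2]) with hL
  -- the function F and its trigonometric closed form
  set F : ℝ → ℝ := fun θ => ∫ p in S2, (p 0 * p 2) * w (rot θ p) ∂(μH[2]) with hF
  have hFform : ∀ θ, F θ = Real.cos θ * Real.sin θ * (J2 - J0)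
      + (Real.cos θ ^ 2 - Real.sin θ ^ 2) * K := by
    intro θ
    have hsub := rot_integral_comp (-θ) (fun p => (p 0 * p 2) * w (rot θ p))
    have hlhs : (∫ p in S2, ((rot (-θ) p) 0 * (rot (-θ) p) 2) * w (rot θ (rot (-θ) p)) ∂(μH[2]))
        = F θ := hsub
    have hpoint : ∀ p : E3, ((rot (-θ) p) 0 * (rot (-θ) p) 2) * w (rot θ (rot (-θ) p))
        = (Real.cos θ * Real.sin θ) * (p 2 ^ 2 * w p)
          - (Real.cos θ * Real.sin θ) * (p 0 ^ 2 * w p)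
          + (Real.cos θ ^ 2 - Real.sin θ ^ 2) * (p 0 * p 2 * w p) := by
      intro p
      rw [rot_rot_neg, rot_apply0, rot_apply2, Real.cos_neg, Real.sin_neg]
      ring
    rw [← hlhs]
    rw [integral_congr_ae (Filter.Eventually.of_forall hpoint)]
    have hI1 : Integrable (fun a : E3 => Real.cos θ * Real.sin θ * (a 2 ^ 2 * w a)
        - Real.cos θ * Real.sin θ * (a 0 ^ 2 * w a)) ((μH[2] : Measure E3).restrict S2) :=
      (hintJ2.const_mul _).sub (hintJ0.const_mul _)
    have hI2 : Integrable (fun a : E3 => (Real.cos θ ^ 2 - Real.sin θ ^ 2)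
        * (a 0 * a 2 * w a)) ((μH[2] : Measure E3).restrict S2) := hintK.const_mul _
    have hI3 : Integrable (fun a : E3 => Real.cos θ * Real.sin θ * (a 2 ^ 2 * w a))
        ((μH[2] : Measure E3).restrict S2) := hintJ2.const_mul _
    have hI4 : Integrable (fun a : E3 => Real.cos θ * Real.sin θ * (a 0 ^ 2 * w a))
        ((μH[2] : Measure E3).restrict S2) := hintJ0.const_mul _
    rw [integral_add hI1 hI2, integral_sub hI3 hI4,
      integral_const_mul, integral_const_mul, integral_const_mul]
    rw [← hJ0, ← hJ2, ← hK]
    ring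
  -- derivative of the closed form at 0
  have hGder : HasDerivAt F (J2 - J0) 0 := by
    have h1 : HasDerivAt (fun θ : ℝ => Real.cos θ * Real.sin θ * (J2 - J0)
        + (Real.cos θ ^ 2 - Real.sin θ ^ 2) * K)
        ((-Real.sin 0 * Real.sin 0 + Real.cos 0 * Real.cos 0) * (J2 - J0)
          + (2 * Real.cos 0 ^ 1 * -Real.sin 0 - 2 * Real.sin 0 ^ 1 * Real.cos 0) * K) 0 := by
      exact (((Real.hasDerivAt_cos 0).mul (Real.hasDerivAt_sin 0)).mul_const (J2 - J0)).add
        ((((Real.hasDerivAt_cos 0).pow 2).sub ((Real.hasDerivAt_sin 0).pow 2)).mul_const K)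
    have h2 : ((-Real.sin 0 * Real.sin 0 + Real.cos 0 * Real.cos 0) * (J2 - J0)
        + (2 * Real.cos 0 ^ 1 * -Real.sin 0 - 2 * Real.sin 0 ^ 1 * Real.cos 0) * K)
        = J2 - J0 := by
      simp [Real.sin_zero, Real.cos_zero]
    rw [h2] at h1
    have : F = fun θ : ℝ => Real.cos θ * Real.sin θ * (J2 - J0)
        + (Real.cos θ ^ 2 - Real.sin θ ^ 2) * K := funext hFform
    rw [this]
    exact h1
  -- derivative via differentiation under the integral
  set f' : ℝ → E3 → ℝ := fun θ p => (p 0 * p 2) *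
      (Real.exp (β * (γ₁ * (Real.cos θ * p 0 - Real.sin θ * p 2) ^ 2 + γ₂ * p 1 ^ 2
          + γ₃ * (Real.sin θ * p 0 + Real.cos θ * p 2) ^ 2)) *
        (β * (γ₁ * (2 * (Real.cos θ * p 0 - Real.sin θ * p 2) ^ 1
              * (-Real.sin θ * p 0 - Real.cos θ * p 2)) + 0
            + γ₃ * (2 * (Real.sin θ * p 0 + Real.cos θ * p 2) ^ 1
              * (Real.cos θ * p 0 - Real.sin θ * p 2))))) with hf'
  have hderiv : ∀ (p : E3), ∀ θ : ℝ,
      HasDerivAt (fun t => (p 0 * p 2) * w (rot t p)) (f' θ p) θ := by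
    intro p θ
    have ha : HasDerivAt (fun t => Real.cos t * p 0 - Real.sin t * p 2)
        (-Real.sin θ * p 0 - Real.cos θ * p 2) θ :=
      ((Real.hasDerivAt_cos θ).mul_const (p 0)).sub ((Real.hasDerivAt_sin θ).mul_const (p 2))
    have hb : HasDerivAt (fun t => Real.sin t * p 0 + Real.cos t * p 2)
        (Real.cos θ * p 0 - Real.sin θ * p 2) θ := by
      have := ((Real.hasDerivAt_sin θ).mul_const (p 0)).add
        ((Real.hasDerivAt_cos θ).mul_const (p 2))
      exact this.congr_deriv (by ring)
    have hq : HasDerivAt (fun t => β * (γ₁ * (Real.cos t * p 0 - Real.sin t * p 2) ^ 2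
        + γ₂ * p 1 ^ 2 + γ₃ * (Real.sin t * p 0 + Real.cos t * p 2) ^ 2))
        (β * (γ₁ * (2 * (Real.cos θ * p 0 - Real.sin θ * p 2) ^ 1
              * (-Real.sin θ * p 0 - Real.cos θ * p 2)) + 0
            + γ₃ * (2 * (Real.sin θ * p 0 + Real.cos θ * p 2) ^ 1
              * (Real.cos θ * p 0 - Real.sin θ * p 2)))) θ :=
      ((((ha.pow 2).const_mul γ₁).add (hasDerivAt_const θ (γ₂ * p 1 ^ 2))).add
        ((hb.pow 2).const_mul γ₃)).const_mul β
    have hexp := hq.exp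
    have := hexp.const_mul (p 0 * p 2)
    have hfun : (fun t => (p 0 * p 2) * w (rot t p))
        = fun t => (p 0 * p 2) * Real.exp (β * (γ₁ * (Real.cos t * p 0 - Real.sin t * p 2) ^ 2
          + γ₂ * p 1 ^ 2 + γ₃ * (Real.sin t * p 0 + Real.cos t * p 2) ^ 2)) := by
      funext t
      rw [hw]
      simp only [rot_apply0, rot_apply1, rot_apply2]
    rw [hf', hfun]
    exact this
  -- the uniform bound for f'
  set C : ℝ := Real.exp (β * G) * (β * (2 * G)) with hC
  have hbound : ∀ p ∈ S2, ∀ θ : ℝ, |f' θ p| ≤ C := by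
    intro p hp θ
    set a : ℝ := Real.cos θ * p 0 - Real.sin θ * p 2 with hadef
    set b : ℝ := Real.sin θ * p 0 + Real.cos θ * p 2 with hbdef
    have pyth := Real.sin_sq_add_cos_sq θ
    have hsum := S2_sum_sq hp
    have hab : a ^ 2 + b ^ 2 = p 0 ^ 2 + p 2 ^ 2 := by
      rw [hadef, hbdef]; linear_combination (p 0 ^ 2 + p 2 ^ 2) * pyth
    have ha1 : |a| ≤ 1 := by
      rw [← Real.sqrt_one, show |a| = Real.sqrt (a ^ 2) by rw [Real.sqrt_sq_eq_abs]]
      apply Real.sqrt_le_sqrt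
      nlinarith [sq_nonneg b, sq_nonneg (p 1)]
    have hb1 : |b| ≤ 1 := by
      rw [← Real.sqrt_one, show |b| = Real.sqrt (b ^ 2) by rw [Real.sqrt_sq_eq_abs]]
      apply Real.sqrt_le_sqrt
      nlinarith [sq_nonneg a, sq_nonneg (p 1)]
    have hExp : Real.exp (β * (γ₁ * a ^ 2 + γ₂ * p 1 ^ 2 + γ₃ * b ^ 2))
        ≤ Real.exp (β * G) := by
      apply Real.exp_le_exp.mpr
      apply mul_le_mul_of_nonneg_left _ (le_of_lt hβ)
      have h1 : a ^ 2 ≤ 1 := by nlinarith [sq_nonneg b, sq_nonneg (p 1)]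
      have h2 : b ^ 2 ≤ 1 := by nlinarith [sq_nonneg a, sq_nonneg (p 1)]
      have h3 := (hsq p hp).2.1
      rw [hG]
      nlinarith [neg_abs_le γ₁, le_abs_self γ₁, neg_abs_le γ₂, le_abs_self γ₂,
        neg_abs_le γ₃, le_abs_self γ₃, sq_nonneg a, sq_nonneg b, sq_nonneg (p 1)]
    have hInner : |γ₁ * (2 * a ^ 1 * (-Real.sin θ * p 0 - Real.cos θ * p 2)) + 0
        + γ₃ * (2 * b ^ 1 * a)| ≤ 2 * G := by
      have hnb : (-Real.sin θ * p 0 - Real.cos θ * p 2) = -b := by rw [hbdef]; ring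
      rw [hnb]
      have e1 : γ₁ * (2 * a ^ 1 * -b) + 0 + γ₃ * (2 * b ^ 1 * a)
          = 2 * (a * b) * (γ₃ - γ₁) := by ring
      rw [e1, abs_mul, abs_mul]
      have hab1 : |a * b| ≤ 1 := by
        rw [abs_mul]
        calc |a| * |b| ≤ 1 * 1 := mul_le_mul ha1 hb1 (abs_nonneg _) zero_le_one
          _ = 1 := one_mul 1
      have hg13 : |γ₃ - γ₁| ≤ G := by
        rw [hG]
        calc |γ₃ - γ₁| ≤ |γ₃| + |γ₁| := abs_sub γ₃ γ₁
          _ ≤ |γ₁| + |γ₂| + |γ₃| := by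
              have := abs_nonneg γ₂; linarith
      calc |(2:ℝ)| * |a * b| * |γ₃ - γ₁| ≤ 2 * 1 * G := by
            rw [show |(2:ℝ)| = 2 by norm_num]
            apply mul_le_mul _ hg13 (abs_nonneg _) (by norm_num)
            calc (2:ℝ) * |a * b| ≤ 2 * 1 := by linarith
              _ = 2 * 1 := rfl
        _ = 2 * G := by ring
    have hpp : |p 0 * p 2| ≤ 1 := by
      rw [abs_mul]
      calc |p 0| * |p 2| ≤ 1 * 1 :=
        mul_le_mul (habs1 p hp 0) (habs1 p hp 2) (abs_nonneg _) zero_le_one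
      _ = 1 := one_mul 1
    rw [hf']
    show |(p 0 * p 2) * (Real.exp (β * (γ₁ * a ^ 2 + γ₂ * p 1 ^ 2 + γ₃ * b ^ 2)) *
        (β * (γ₁ * (2 * a ^ 1 * (-Real.sin θ * p 0 - Real.cos θ * p 2)) + 0
          + γ₃ * (2 * b ^ 1 * a))))| ≤ C
    simp only [abs_mul, Real.abs_exp, abs_of_pos hβ]
    have h1 : |p 0| * |p 2| ≤ 1 := by
      calc |p 0| * |p 2| ≤ 1 * 1 :=
        mul_le_mul (habs1 p hp 0) (habs1 p hp 2) (abs_nonneg _) zero_le_one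
      _ = 1 := one_mul 1
    have hstep : β * |γ₁ * (2 * a ^ 1 * (-Real.sin θ * p 0 - Real.cos θ * p 2)) + 0
        + γ₃ * (2 * b ^ 1 * a)| ≤ β * (2 * G) :=
      mul_le_mul_of_nonneg_left hInner hβ.le
    have hstep2 : Real.exp (β * (γ₁ * a ^ 2 + γ₂ * p 1 ^ 2 + γ₃ * b ^ 2))
        * (β * |γ₁ * (2 * a ^ 1 * (-Real.sin θ * p 0 - Real.cos θ * p 2)) + 0
          + γ₃ * (2 * b ^ 1 * a)|)
        ≤ Real.exp (β * G) * (β * (2 * G)) :=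
      mul_le_mul hExp hstep (by positivity) (Real.exp_pos _).le
    refine le_trans (mul_le_mul h1 hstep2 (by positivity) zero_le_one) ?_
    rw [one_mul, hC]
  -- apply the dominated differentiation theorem
  have hmain := hasDerivAt_integral_of_dominated_loc_of_deriv_le (F := fun θ p =>
      (p 0 * p 2) * w (rot θ p)) (F' := f') (x₀ := (0:ℝ))
      (bound := fun _ => C) (μ := (μH[2] : Measure E3).restrict S2) (Metric.ball_mem_nhds (0:ℝ) one_pos)
    (Filter.Eventually.of_forall fun θ =>
      (((continuous_coord 0).mul (continuous_coord 2)).mul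
        (hcont_w.comp (hcont_rot θ))).aestronglyMeasurable.restrict)
    (by
      apply integrableOn_S2 (((continuous_coord 0).mul (continuous_coord 2)).mul
        (hcont_w.comp (hcont_rot 0))) (Real.exp (β * G))
      intro p hp
      simp only [Pi.mul_apply, Function.comp_apply]
      rw [abs_mul]
      have h1 : |p 0 * p 2| ≤ 1 := by
        rw [abs_mul]
        calc |p 0| * |p 2| ≤ 1 * 1 :=
          mul_le_mul (habs1 p hp 0) (habs1 p hp 2) (abs_nonneg _) zero_le_one
        _ = 1 := one_mul 1
      calc |p 0 * p 2| * |w (rot 0 p)| ≤ 1 * Real.exp (β * G) := by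
            apply mul_le_mul h1 _ (abs_nonneg _) zero_le_one
            rw [abs_of_pos (hw_pos _)]
            exact hwrot_le 0 p hp
        _ = Real.exp (β * G) := one_mul _)
    (by
      have : Continuous (f' 0) := by rw [hf']; fun_prop
      exact this.aestronglyMeasurable.restrict)
    (by
      rw [ae_restrict_iff' S2_measurable]
      filter_upwards with p hp
      intro θ _
      rw [Real.norm_eq_abs]
      exact hbound p hp θ)
    (integrable_const C)
    (Filter.Eventually.of_forall fun p θ _ => hderiv p θ)
  have hFder : HasDerivAt F (∫ p in S2, f' 0 p ∂(μH[2])) 0 := hmain.2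
  have huniq : (∫ p in S2, f' 0 p ∂(μH[2])) = J2 - J0 := hFder.unique hGder
  -- compute the integral of f' 0
  have hpoint0 : ∀ p : E3, f' 0 p = (2 * β * (γ₃ - γ₁)) * (p 0 ^ 2 * p 2 ^ 2 * w p) := by
    intro p
    rw [hf', hw]
    simp only [Real.cos_zero, Real.sin_zero]
    ring
  have : (∫ p in S2, f' 0 p ∂(μH[2]))
      = 2 * β * (γ₃ - γ₁) * L := by
    rw [integral_congr_ae (Filter.Eventually.of_forall hpoint0), integral_const_mul, hL]
  rw [this] at huniq
  rw [← huniq]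

theorem maierSaupe_identity (β γ₁ γ₂ γ₃ Z : ℝ) (hβ : 0 < β)
    (hZ : Z = ∫ p in S2, Real.exp (β * (γ₁ * p 0 ^ 2 + γ₂ * p 1 ^ 2 + γ₃ * p 2 ^ 2)) ∂(μH[2]))
    (ρ : EuclideanSpace ℝ (Fin 3) → ℝ)
    (hρ : ∀ p, ρ p = Z⁻¹ * Real.exp (β * (γ₁ * p 0 ^ 2 + γ₂ * p 1 ^ 2 + γ₃ * p 2 ^ 2)))
    (h13 : γ₁ ≠ γ₃)
    (hsc1 : ∫ p in S2, p 0 ^ 2 * ρ p ∂(μH[2]) = γ₁)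
    (hsc2 : ∫ p in S2, p 1 ^ 2 * ρ p ∂(μH[2]) = γ₂)
    (hsc3 : ∫ p in S2, p 2 ^ 2 * ρ p ∂(μH[2]) = γ₃) :
    2 * β * ∫ p in S2, p 0 ^ 2 * p 2 ^ 2 * ρ p ∂(μH[2]) = 1 := by
  have hkey := key_identity β γ₁ γ₂ γ₃ hβ
    (fun p => Real.exp (β * (γ₁ * p 0 ^ 2 + γ₂ * p 1 ^ 2 + γ₃ * p 2 ^ 2))) rfl
  beta_reduce at hkey
  have e1 : (∫ p in S2, p 0 ^ 2 * ρ p ∂(μH[2]))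
      = Z⁻¹ * ∫ p in S2, p 0 ^ 2
          * Real.exp (β * (γ₁ * p 0 ^ 2 + γ₂ * p 1 ^ 2 + γ₃ * p 2 ^ 2)) ∂(μH[2]) := by
    rw [← integral_const_mul]
    apply integral_congr_ae
    filter_upwards with p
    rw [hρ p]; ring
  have e3 : (∫ p in S2, p 2 ^ 2 * ρ p ∂(μH[2]))
      = Z⁻¹ * ∫ p in S2, p 2 ^ 2
          * Real.exp (β * (γ₁ * p 0 ^ 2 + γ₂ * p 1 ^ 2 + γ₃ * p 2 ^ 2)) ∂(μH[2]) := by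
    rw [← integral_const_mul]
    apply integral_congr_ae
    filter_upwards with p
    rw [hρ p]; ring
  have eL : (∫ p in S2, p 0 ^ 2 * p 2 ^ 2 * ρ p ∂(μH[2]))
      = Z⁻¹ * ∫ p in S2, p 0 ^ 2 * p 2 ^ 2
          * Real.exp (β * (γ₁ * p 0 ^ 2 + γ₂ * p 1 ^ 2 + γ₃ * p 2 ^ 2)) ∂(μH[2]) := by
    rw [← integral_const_mul]
    apply integral_congr_ae
    filter_upwards with p
    rw [hρ p]; ring
  rw [e1] at hsc1
  rw [e3] at hsc3
  rw [eL]
  have h0 : (γ₃ - γ₁) * (2 * β * (Z⁻¹ * ∫ p in S2, p 0 ^ 2 * p 2 ^ 2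
      * Real.exp (β * (γ₁ * p 0 ^ 2 + γ₂ * p 1 ^ 2 + γ₃ * p 2 ^ 2)) ∂(μH[2])) - 1) = 0 := by
    linear_combination (-Z⁻¹) * hkey + hsc3 - hsc1
  rcases mul_eq_zero.mp h0 with h | h
  · exact absurd (by linarith : γ₁ = γ₃) h13
  · linarith
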